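/- arXiv:1104.5697 — 4 statements merged into one kernel-verified Lean document; each statement's English description precedes it below -/
import Mathlib

section
/- Let m, n ≥ 2 be natural numbers and a, b positive natural numbers with gcd(a,b) = 1 and m^a = n^b. Then the subgroup {k·log m + ℓ·log n : k, ℓ ∈ ℤ} of (ℝ, +) equals ((1/b)·log m)·ℤ. -/
theorem stmt2 (m n a b : ℕ) (hm : 2 ≤ m) (hn : 2 ≤ n) (ha : 0 < a) (hb : 0 < b)
    (hgcd : Nat.gcd a b = 1) (hpow : m ^ a = n ^ b) :
    {r : ℝ | ∃ k l : ℤ, r = k * Real.log m + l * Real.log n} =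
      {r : ℝ | ∃ N : ℤ, r = N * ((1 / (b : ℝ)) * Real.log m)} := by
  have hb0 : (b : ℝ) ≠ 0 := Nat.cast_ne_zero.mpr hb.ne'
  have hlog : (a : ℝ) * Real.log m = (b : ℝ) * Real.log n := by
    have h := congrArg Real.log (congrArg (Nat.cast (R := ℝ)) hpow)
    push_cast at h
    rw [Real.log_pow, Real.log_pow] at h
    exact_mod_cast h
  have hln : Real.log n = (a : ℝ) / b * Real.log m := by
    field_simp
    linarith
  ext r
  simp only [Set.mem_setOf_eq]
  constructor
  · rintro ⟨k, l, rfl⟩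
    refine ⟨k * b + l * a, ?_⟩
    rw [hln]
    push_cast
    field_simp
  · rintro ⟨N, rfl⟩
    obtain ⟨u, v, huv⟩ : ∃ u v : ℤ, u * a + v * b = 1 :=
      ⟨Nat.gcdA a b, Nat.gcdB a b, by
        rw [mul_comm (Nat.gcdA a b), mul_comm (Nat.gcdB a b), ← Nat.gcd_eq_gcd_ab, hgcd]; rfl⟩
    have hcast : (u : ℝ) * a + v * b = 1 := by exact_mod_cast congrArg (fun z : ℤ => (z : ℝ)) huv
    refine ⟨N * v, N * u, ?_⟩
    rw [hln]
    push_cast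
    field_simp
    linear_combination (-(N : ℝ) * Real.log m) * hcast
end

section
/- Let m, n ≥ 2 be natural numbers and a, b positive natural numbers with gcd(a,b) = 1 and m^a = n^b. Then the closure in ℝ of the set {m^k · n^ℓ : k, ℓ ∈ ℤ} equals {0} ∪ {(m^{1/b})^N : N ∈ ℤ}, where m^{1/b} denotes the positive real b-th root of m. -/
theorem stmt3 (m n a b : ℕ) (hm : 2 ≤ m) (hn : 2 ≤ n) (ha : 0 < a) (hb : 0 < b)
    (hgcd : Nat.gcd a b = 1) (hpow : m ^ a = n ^ b) :
    closure {x : ℝ | ∃ k l : ℤ, x = (m : ℝ) ^ k * (n : ℝ) ^ l} =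
      insert (0 : ℝ) {x : ℝ | ∃ N : ℤ, x = ((m : ℝ) ^ ((1 : ℝ) / (b : ℝ))) ^ N} := by
  have hm1 : (1 : ℝ) < (m : ℝ) := by exact_mod_cast lt_of_lt_of_le one_lt_two (by exact_mod_cast hm)
  have hm0 : (0 : ℝ) < (m : ℝ) := lt_trans one_pos hm1
  have hbR : (0 : ℝ) < (b : ℝ) := by exact_mod_cast hb
  set r : ℝ := (m : ℝ) ^ ((1 : ℝ) / (b : ℝ)) with hr_def
  have hr1 : 1 < r := by
    rw [hr_def]
    exact (Real.one_lt_rpow_iff_of_pos hm0).2 (Or.inl ⟨hm1, by positivity⟩)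
  have hr0 : 0 < r := lt_trans one_pos hr1
  -- m = r ^ b
  have hmr : (m : ℝ) = r ^ (b : ℤ) := by
    rw [hr_def, zpow_natCast, ← Real.rpow_natCast ((m:ℝ) ^ ((1:ℝ)/(b:ℝ))) b,
      ← Real.rpow_mul hm0.le, one_div, inv_mul_cancel₀ hbR.ne', Real.rpow_one]
  -- n = r ^ a
  have hnr : (n : ℝ) = r ^ (a : ℤ) := by
    have hcast : ((m : ℝ)) ^ (a : ℕ) = ((n : ℝ)) ^ (b : ℕ) := by exact_mod_cast congrArg (Nat.cast (R := ℝ)) hpow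
    have hn0 : (0 : ℝ) ≤ (n : ℝ) := by positivity
    have : ((n : ℝ) ^ (b : ℕ)) ^ ((1:ℝ)/(b:ℝ)) = (n : ℝ) := by
      rw [← Real.rpow_natCast (n:ℝ) b, ← Real.rpow_mul hn0, mul_one_div,
        div_self hbR.ne', Real.rpow_one]
    rw [← this, ← hcast, ← Real.rpow_natCast (m:ℝ) a, ← Real.rpow_mul hm0.le,
      mul_one_div, div_eq_mul_one_div, mul_comm, Real.rpow_mul hm0.le, ← hr_def,
      Real.rpow_natCast, zpow_natCast]
  -- the two sets (before closure/insert) coincide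
  have hset : {x : ℝ | ∃ k l : ℤ, x = (m : ℝ) ^ k * (n : ℝ) ^ l}
      = {x : ℝ | ∃ N : ℤ, x = r ^ N} := by
    ext x
    constructor
    · rintro ⟨k, l, rfl⟩
      exact ⟨(b : ℤ) * k + (a : ℤ) * l, by
        rw [hmr, hnr, ← zpow_mul, ← zpow_mul, ← zpow_add₀ hr0.ne']⟩
    · rintro ⟨N, rfl⟩
      have hbez : (a : ℤ) * Nat.gcdA a b + (b : ℤ) * Nat.gcdB a b = 1 := by
        have := Nat.gcd_eq_gcd_ab a b
        rw [hgcd] at this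
        exact_mod_cast this.symm
      refine ⟨Nat.gcdB a b * N, Nat.gcdA a b * N, ?_⟩
      rw [hmr, hnr, ← zpow_mul, ← zpow_mul, ← zpow_add₀ hr0.ne']
      congr 1
      have : (b : ℤ) * (Nat.gcdB a b * N) + (a : ℤ) * (Nat.gcdA a b * N)
          = ((a : ℤ) * Nat.gcdA a b + (b : ℤ) * Nat.gcdB a b) * N := by ring
      rw [this, hbez, one_mul]
  rw [hset]
  set S : Set ℝ := {x : ℝ | ∃ N : ℤ, x = r ^ N} with hS_def
  apply le_antisymm
  · -- closure S ⊆ insert 0 S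
    intro x hx
    have hxnonneg : 0 ≤ x := by
      have : S ⊆ Set.Ici (0 : ℝ) := by
        rintro y ⟨N, rfl⟩; exact (zpow_pos hr0 N).le
      exact (closure_minimal this isClosed_Ici) hx
    rcases eq_or_lt_of_le hxnonneg with h0 | hxpos
    · exact Or.inl h0.symm
    · right
      have hlog : Real.log x ∈ closure (Real.log '' S) :=
        mem_closure_image (Real.continuousAt_log hxpos.ne') hx
      have himg : Real.log '' S ⊆ (AddSubgroup.zmultiples (Real.log r) : Set ℝ) := by
        rintro y ⟨z, ⟨N, rfl⟩, rfl⟩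
        rw [Real.log_zpow]
        exact ⟨N, by simp [zsmul_eq_mul]⟩
      have hclosed : IsClosed ((AddSubgroup.zmultiples (Real.log r) : Set ℝ)) :=
        AddSubgroup.isClosed_of_discrete
      have hmem : Real.log x ∈ (AddSubgroup.zmultiples (Real.log r) : Set ℝ) :=
        closure_minimal himg hclosed hlog
      obtain ⟨N, hN⟩ := hmem
      refine ⟨N, ?_⟩
      have : x = Real.exp (Real.log x) := (Real.exp_log hxpos).symm
      rw [this, ← hN]
      simp only [zsmul_eq_mul]
      rw [mul_comm, ← Real.rpow_def_of_pos hr0, Real.rpow_intCast]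
  · -- insert 0 S ⊆ closure S
    intro x hx
    rcases hx with rfl | hxS
    · -- 0 is a limit of r ^ (-j)
      have htend : Filter.Tendsto (fun j : ℕ => r ^ (-(j : ℤ))) Filter.atTop (nhds 0) := by
        have : ∀ j : ℕ, r ^ (-(j : ℤ)) = (r⁻¹) ^ j := by
          intro j; rw [zpow_neg, ← inv_zpow, zpow_natCast]
        simp only [this]
        exact tendsto_pow_atTop_nhds_zero_of_lt_one (by positivity) (inv_lt_one_of_one_lt₀ hr1)
      exact mem_closure_of_tendsto htend (Filter.Eventually.of_forall fun j => ⟨-(j : ℤ), rfl⟩)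
    · exact subset_closure hxS
end

section
/- Let m, n ≥ 2 be natural numbers with (log m)/(log n) irrational. Then the closure in ℝ of the set {m^k · n^ℓ : k, ℓ ∈ ℤ} equals [0, ∞). -/
theorem stmt4 (m n : ℕ) (hm : 2 ≤ m) (hn : 2 ≤ n)
    (hirr : Irrational (Real.log m / Real.log n)) :
    closure {x : ℝ | ∃ k l : ℤ, x = (m : ℝ) ^ k * (n : ℝ) ^ l} = Set.Ici (0 : ℝ) := by
  set S : Set ℝ := {x : ℝ | ∃ k l : ℤ, x = (m : ℝ) ^ k * (n : ℝ) ^ l} with hS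
  have hm1 : (1 : ℝ) < m := by exact_mod_cast lt_of_lt_of_le one_lt_two (by exact_mod_cast hm)
  have hn1 : (1 : ℝ) < n := by exact_mod_cast lt_of_lt_of_le one_lt_two (by exact_mod_cast hn)
  have hlm : Real.log m ≠ 0 := ne_of_gt (Real.log_pos hm1)
  have hln : Real.log n ≠ 0 := ne_of_gt (Real.log_pos hn1)
  set G : AddSubgroup ℝ := AddSubgroup.closure ({Real.log m, Real.log n} : Set ℝ) with hG
  have hGdense : Dense (G : Set ℝ) := by
    rcases AddSubgroup.dense_or_cyclic G with h | ⟨a, ha⟩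
    · exact h
    · exfalso
      have hmem1 : Real.log m ∈ G := AddSubgroup.subset_closure (by simp)
      have hmem2 : Real.log n ∈ G := AddSubgroup.subset_closure (by simp)
      rw [ha, AddSubgroup.mem_closure_singleton] at hmem1 hmem2
      obtain ⟨k, hk⟩ := hmem1
      obtain ⟨l, hl⟩ := hmem2
      have hane : a ≠ 0 := by
        rintro rfl; simp at hk; exact hlm hk.symm
      have hlne : (l : ℝ) ≠ 0 := by
        intro h
        apply hln
        rw [← hl, zsmul_eq_mul, h, zero_mul]
      apply hirr
      refine ⟨(k : ℚ) / l, ?_⟩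
      rw [← hk, ← hl]
      push_cast
      field_simp
      ring
  -- exp of elements of G lie in S
  have hexp : ∀ g ∈ G, Real.exp g ∈ S := by
    intro g hg
    induction hg using AddSubgroup.closure_induction with
    | mem x hx =>
      rcases hx with rfl | rfl
      · exact ⟨1, 0, by simp [Real.exp_log (by linarith : (0:ℝ) < m)]⟩
      · exact ⟨0, 1, by simp [Real.exp_log (by linarith : (0:ℝ) < n)]⟩
    | zero => exact ⟨0, 0, by simp⟩
    | add x y _ _ hx hy =>
      obtain ⟨k1, l1, h1⟩ := hx
      obtain ⟨k2, l2, h2⟩ := hy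
      exact ⟨k1 + k2, l1 + l2, by rw [Real.exp_add, h1, h2, zpow_add₀ (by linarith : (m:ℝ) ≠ 0),
        zpow_add₀ (by linarith : (n:ℝ) ≠ 0)]; ring⟩
    | neg x _ hx =>
      obtain ⟨k1, l1, h1⟩ := hx
      exact ⟨-k1, -l1, by rw [Real.exp_neg, h1, mul_inv, ← zpow_neg, ← zpow_neg]⟩
  apply subset_antisymm
  · refine closure_minimal ?_ isClosed_Ici
    rintro x ⟨k, l, rfl⟩
    have hm0 : (0:ℝ) < m := by linarith
    have hn0 : (0:ℝ) < n := by linarith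
    exact le_of_lt (mul_pos (zpow_pos hm0 _) (zpow_pos hn0 _))
  · rw [← closure_Ioi (0 : ℝ)]
    refine closure_minimal ?_ isClosed_closure
    intro x hx
    have hlog : Real.log x ∈ closure (G : Set ℝ) := hGdense _
    have : Real.exp (Real.log x) ∈ closure S := by
      have h1 : Real.exp (Real.log x) ∈ Real.exp '' closure (G : Set ℝ) :=
        ⟨Real.log x, hlog, rfl⟩
      have h2 : Real.exp '' closure (G : Set ℝ) ⊆ closure (Real.exp '' (G : Set ℝ)) :=
        image_closure_subset_closure_image Real.continuous_exp
      exact by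
        refine closure_mono ?_ (h2 h1)
        rintro y ⟨g, hg, rfl⟩
        exact hexp g hg
    rwa [Real.exp_log hx] at this
end

section
/- Let m, n ≥ 2 be natural numbers. The subgroup (2π/log m)·ℤ ∩ (2π/log n)·ℤ of ℝ is trivial ({0}) if (log m)/(log n) is irrational, and equals (2πb/log m)·ℤ = (2πa/log n)·ℤ if a, b are coprime positive integers with m^a = n^b. -/
theorem stmt5 (m n : ℕ) (hm : 2 ≤ m) (hn : 2 ≤ n) :
    (Irrational (Real.log m / Real.log n) →
      {x : ℝ | ∃ k : ℤ, x = k * (2 * Real.pi / Real.log m)} ∩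
        {x : ℝ | ∃ k : ℤ, x = k * (2 * Real.pi / Real.log n)} = {0}) ∧
    (∀ a b : ℕ, 0 < a → 0 < b → Nat.gcd a b = 1 → m ^ a = n ^ b →
      ({x : ℝ | ∃ k : ℤ, x = k * (2 * Real.pi / Real.log m)} ∩
        {x : ℝ | ∃ k : ℤ, x = k * (2 * Real.pi / Real.log n)} =
        {x : ℝ | ∃ k : ℤ, x = k * (2 * Real.pi * b / Real.log m)}) ∧
      ({x : ℝ | ∃ k : ℤ, x = k * (2 * Real.pi * b / Real.log m)} =
        {x : ℝ | ∃ k : ℤ, x = k * (2 * Real.pi * a / Real.log n)})) := by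
  have hLm : (0:ℝ) < Real.log m := Real.log_pos (by exact_mod_cast hm.trans_lt' one_lt_two)
  have hLn : (0:ℝ) < Real.log n := Real.log_pos (by exact_mod_cast hn.trans_lt' one_lt_two)
  have hLm' := hLm.ne'
  have hLn' := hLn.ne'
  have hpi := Real.pi_ne_zero
  constructor
  · intro hirr
    ext x
    simp only [Set.mem_inter_iff, Set.mem_setOf_eq, Set.mem_singleton_iff]
    constructor
    · rintro ⟨⟨k, hk⟩, ⟨j, hj⟩⟩
      by_cases hj0 : j = 0
      · rw [hj, hj0]; simp
      have key : (k : ℝ) * Real.log n = (j : ℝ) * Real.log m := by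
        have h0 := hk.symm.trans hj
        field_simp at h0
        exact mul_left_cancel₀ (by positivity : (2:ℝ) * Real.pi ≠ 0)
          (by linear_combination (2 * Real.pi) * h0)
      have : Real.log m / Real.log n = ((k : ℚ) / (j : ℚ) : ℚ) := by
        push_cast
        rw [div_eq_div_iff hLn' (by exact_mod_cast hj0)]
        linarith [key]
      exact absurd (this ▸ ⟨_, rfl⟩) hirr
    · rintro rfl
      exact ⟨⟨0, by simp⟩, ⟨0, by simp⟩⟩
  · intro a b ha hb hcop hpow
    have hlog : (a : ℝ) * Real.log m = (b : ℝ) * Real.log n := by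
      have : Real.log ((m : ℝ) ^ a) = Real.log ((n : ℝ) ^ b) := by
        congr 1
        exact_mod_cast congrArg (Nat.cast : ℕ → ℝ) hpow
      simpa [Real.log_pow] using this
    have hconst : 2 * Real.pi * b / Real.log m = 2 * Real.pi * a / Real.log n := by
      rw [div_eq_div_iff hLm' hLn']
      linear_combination (-(2*Real.pi))*hlog
    refine ⟨?_, ?_⟩
    · ext x
      simp only [Set.mem_inter_iff, Set.mem_setOf_eq]
      constructor
      · rintro ⟨⟨k, hk⟩, ⟨j, hj⟩⟩
        -- k * M = j * L where L = log m, M = log n; with a L = b M get k a = j b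
        have key : (k : ℝ) * Real.log n = (j : ℝ) * Real.log m := by
          have h0 := hk.symm.trans hj
          field_simp at h0
          exact mul_left_cancel₀ (by positivity : (2:ℝ) * Real.pi ≠ 0)
            (by linear_combination (2 * Real.pi) * h0)
        have hab : (k : ℝ) * a = (j : ℝ) * b := by
          have hbpos : (0:ℝ) < (b:ℝ) := by exact_mod_cast hb
          have : (k : ℝ) * a * Real.log m = (j : ℝ) * b * Real.log m := by
            calc (k : ℝ) * a * Real.log m = (k : ℝ) * ((a:ℝ) * Real.log m) := by ring
              _ = (k : ℝ) * ((b:ℝ) * Real.log n) := by rw [hlog]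
              _ = (b:ℝ) * ((k:ℝ) * Real.log n) := by ring
              _ = (b:ℝ) * ((j:ℝ) * Real.log m) := by rw [key]
              _ = (j : ℝ) * b * Real.log m := by ring
          exact mul_right_cancel₀ hLm' this
        have habZ : k * (a:ℤ) = j * (b:ℤ) := by exact_mod_cast hab
        have hdvd : (b:ℤ) ∣ k := by
          have hd : (b:ℤ) ∣ k * (a:ℤ) := ⟨j, by linarith [habZ]⟩
          have hcop' : IsCoprime (b:ℤ) (a:ℤ) :=
            Int.isCoprime_iff_gcd_eq_one.mpr
              (by simpa [Int.gcd, Nat.gcd_comm] using hcop)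
          exact hcop'.dvd_of_dvd_mul_right hd
        obtain ⟨t, rfl⟩ := hdvd
        refine ⟨t, ?_⟩
        rw [hk]
        push_cast
        field_simp
      · rintro ⟨k, rfl⟩
        constructor
        · exact ⟨k * b, by push_cast; field_simp⟩
        · refine ⟨k * a, ?_⟩
          rw [hconst]
          push_cast
          field_simp
    · ext x
      simp only [Set.mem_setOf_eq]
      rw [hconst]
end
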